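/- Let $T$ be a bounded operator on a Hilbert space $H$ which decomposes as $T = \bigoplus_{d \in \mathbb{Z}_+} T|_{H_d}$ over finite-dimensional mutually orthogonal closed invariant subspaces $H_d$ with $H = \bigoplus_d H_d$. If $\zeta$ lies in the polynomially convex hull of $\operatorname{sp}(T)$ but not in the polynomially convex hull of the essential spectrum of $T$, then the set $D = \{ d \in \mathbb{Z}_+ : \zeta \in \operatorname{sp}(T|_{H_d}) \}$ is finite. -/

import Mathlib

open scoped InnerProductSpace

/-- The polynomially convex hull of a subset of `ℂ`: all points where every
polynomial is dominated by its sup over the set. -/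
def polyHull (S : Set ℂ) : Set ℂ :=
  {z | ∀ p : Polynomial ℂ, ‖p.eval z‖ ≤ sSup ((fun w => ‖p.eval w‖) '' S)}

/-- The essential spectrum of a bounded operator: the set of `ζ` such that `T - ζ·I`
is not invertible modulo compact operators (the spectrum in the Calkin algebra). -/
def essSpectrum {H : Type*} [NormedAddCommGroup H] [InnerProductSpace ℂ H]
    (T : H →L[ℂ] H) : Set ℂ :=
  {ζ | ¬ ∃ S : H →L[ℂ] H,
      IsCompactOperator (S * (T - ζ • (1 : H →L[ℂ] H)) - 1 : H →L[ℂ] H) ∧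
      IsCompactOperator ((T - ζ • (1 : H →L[ℂ] H)) * S - 1 : H →L[ℂ] H)}

theorem essSpectrum_subset_spectrum {H : Type*} [NormedAddCommGroup H]
    [InnerProductSpace ℂ H] [CompleteSpace H] (T : H →L[ℂ] H) :
    essSpectrum T ⊆ spectrum ℂ T := by
  intro μ hμ
  by_contra hμ'
  rw [spectrum.notMem_iff] at hμ'
  obtain ⟨u, hu⟩ := hμ'
  apply hμ
  refine ⟨-(u⁻¹ : (H →L[ℂ] H)ˣ), ?_, ?_⟩
  · have : (-(u⁻¹ : (H →L[ℂ] H)ˣ) : H →L[ℂ] H) * (T - μ • (1 : H →L[ℂ] H)) - 1 = 0 := by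
      have h1 : (T - μ • (1 : H →L[ℂ] H)) = -(u : H →L[ℂ] H) := by
        rw [hu]; rw [Algebra.algebraMap_eq_smul_one]; abel
      rw [h1]
      simp [mul_neg, neg_mul]
    rw [this]
    simpa using isCompactOperator_zero (M₁ := H) (M₂ := H)
  · have : (T - μ • (1 : H →L[ℂ] H)) * (-(u⁻¹ : (H →L[ℂ] H)ˣ) : H →L[ℂ] H) - 1 = 0 := by
      have h1 : (T - μ • (1 : H →L[ℂ] H)) = -(u : H →L[ℂ] H) := by
        rw [hu]; rw [Algebra.algebraMap_eq_smul_one]; abel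
      rw [h1]
      simp [mul_neg, neg_mul]
    rw [this]
    simpa using isCompactOperator_zero (M₁ := H) (M₂ := H)

/-- For a block-diagonal operator `T` as above, if `ζ` lies in the
polynomially convex hull of `sp(T)` but not in the polynomially convex hull of the
essential spectrum of `T`, then `ζ` is an eigenvalue of only finitely many blocks. -/
theorem stmt3 {H : Type*} [NormedAddCommGroup H] [InnerProductSpace ℂ H] [CompleteSpace H]
    (T : H →L[ℂ] H) (V : ℕ → Submodule ℂ H)
    (hfin : ∀ d, FiniteDimensional ℂ (V d))
    (horth : ∀ d e, d ≠ e → ∀ x ∈ V d, ∀ y ∈ V e, ⟪x, y⟫_ℂ = 0)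
    (hinv : ∀ d, ∀ x ∈ V d, T x ∈ V d)
    (hdense : (⨆ d, V d).topologicalClosure = ⊤)
    (ζ : ℂ) (hζ : ζ ∈ polyHull (spectrum ℂ T))
    (hζ' : ζ ∉ polyHull (essSpectrum T)) :
    {d : ℕ | ζ ∈ spectrum ℂ ((T : H →ₗ[ℂ] H).restrict (hinv d))}.Finite := by
  by_contra hD
  set Dset := {d : ℕ | ζ ∈ spectrum ℂ ((T : H →ₗ[ℂ] H).restrict (hinv d))} with hDset
  replace hD : Dset.Infinite := hD
  -- unit eigenvectors
  have key : ∀ d : ℕ, ∃ x : H, d ∈ Dset → x ∈ V d ∧ ‖x‖ = 1 ∧ T x = ζ • x := by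
    intro d
    by_cases hd : d ∈ Dset
    · haveI := hfin d
      have hev := Module.End.HasEigenvalue.of_mem_spectrum hd
      obtain ⟨v, hv⟩ := hev.exists_hasEigenvector
      have hv0 : (v : H) ≠ 0 := by
        simpa [Submodule.coe_eq_zero] using hv.right
      have hTv : T (v : H) = ζ • (v : H) := by
        have h1 := hv.apply_eq_smul
        have h2 := congrArg (Subtype.val) h1
        simpa [LinearMap.restrict_apply] using h2
      refine ⟨((‖(v : H)‖ : ℂ))⁻¹ • (v : H), fun _ => ⟨?_, ?_, ?_⟩⟩
      · exact Submodule.smul_mem _ _ v.2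
      · have hn : ‖(v : H)‖ ≠ 0 := norm_ne_zero_iff.mpr hv0
        rw [norm_smul]
        simp [abs_of_nonneg (norm_nonneg (v : H))]
        field_simp
      · rw [map_smul, hTv, smul_comm]
    · exact ⟨0, fun h => absurd h hd⟩
  choose x hx using key
  have hxnorm : ∀ d ∈ Dset, ‖x d‖ = 1 := fun d hd => (hx d hd).2.1
  have hdist : ∀ d ∈ Dset, ∀ e ∈ Dset, d ≠ e → 1 ≤ ‖x d - x e‖ := by
    intro d hd e he hne
    have hinner : ⟪x d, x e⟫_ℂ = 0 := horth d e hne _ (hx d hd).1 _ (hx e he).1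
    have hsq : ‖x d - x e‖ ^ 2 = 2 := by
      rw [@norm_sub_sq ℂ]
      simp [hinner, hxnorm d hd, hxnorm e he]
      norm_num
    nlinarith [norm_nonneg (x d - x e)]
  -- ζ in essential spectrum
  have hess : ζ ∈ essSpectrum T := by
    rintro ⟨S, hK, -⟩
    set K := S * (T - ζ • (1 : H →L[ℂ] H)) - 1 with hKdef
    have hKx : ∀ d ∈ Dset, K (x d) = -(x d) := by
      intro d hd
      have h0 : (T - ζ • (1 : H →L[ℂ] H)) (x d) = 0 := by
        simp [ContinuousLinearMap.sub_apply, (hx d hd).2.2]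
      simp [hKdef, ContinuousLinearMap.sub_apply, ContinuousLinearMap.mul_apply, h0]
    have hK' : IsCompactOperator (K.toLinearMap) := hK
    obtain ⟨C, hC, hCsub⟩ := hK'.image_closedBall_subset_compact (𝕜₁ := ℂ) (𝕜₂ := ℂ) 1
    obtain ⟨t, htfin, htsub⟩ := (Metric.totallyBounded_iff.mp hC.totallyBounded) (1/2) (by norm_num)
    have hmem : ∀ d : ℕ, ∃ c : H, d ∈ Dset → c ∈ t ∧ -(x d) ∈ Metric.ball c (1/2) := by
      intro d
      by_cases hd : d ∈ Dset
      · have hxC : -(x d) ∈ C := by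
          apply hCsub
          refine ⟨x d, ?_, ?_⟩
          · simp [Metric.mem_closedBall, dist_eq_norm, hxnorm d hd]
          · simpa using hKx d hd
        have := htsub hxC
        simp only [Set.mem_iUnion] at this
        obtain ⟨c, hc, hcball⟩ := this
        exact ⟨c, fun _ => ⟨hc, hcball⟩⟩
      · exact ⟨0, fun h => absurd h hd⟩
    choose c hc using hmem
    obtain ⟨d, hd, e, he, hne, hceq⟩ :=
      hD.exists_ne_map_eq_of_mapsTo (fun d hd => (hc d hd).1) htfin
    have h1 : dist (-(x d)) (c d) < 1/2 := (hc d hd).2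
    have h2 : dist (-(x e)) (c e) < 1/2 := (hc e he).2
    rw [hceq] at h1
    have h3 : dist (-(x d)) (-(x e)) < 1 := by
      calc dist (-(x d)) (-(x e)) ≤ dist (-(x d)) (c e) + dist (c e) (-(x e)) :=
            dist_triangle _ _ _
        _ < 1/2 + 1/2 := by rw [dist_comm (c e)]; exact add_lt_add h1 h2
        _ = 1 := by norm_num
    have h4 : dist (-(x d)) (-(x e)) = ‖x d - x e‖ := by
      rw [dist_neg_neg, dist_eq_norm]
    have := hdist d hd e he hne
    linarith [h4 ▸ h3]
  -- contradiction with hζ'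
  apply hζ'
  intro p
  have hsub := essSpectrum_subset_spectrum T
  have hball := spectrum.subset_closedBall_norm_mul (𝕜 := ℂ) T
  have hcont : Continuous fun w : ℂ => ‖p.eval w‖ := (p.continuous).norm
  have hbdd : BddAbove ((fun w => ‖p.eval w‖) '' essSpectrum T) := by
    apply BddAbove.mono (Set.image_mono (hsub.trans hball))
    exact ((isCompact_closedBall _ _).image hcont).bddAbove
  exact le_csSup hbdd ⟨ζ, hess, rfl⟩
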